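/- If S ⊆ V is a nonempty independent set in G (no edge of G has both endpoints in S) with |S| = m, then there exists a point c ∈ ℝ^E such that Σ_{v∈S} ‖x_v − c‖_∞ = m/2. -/

import Mathlib

open Finset
open scoped InnerProductSpace

/-- If `S` is a nonempty independent set in `G` with `|S| = m`, then
there is a point `c` with `Σ_{v∈S} ‖x_v − c‖_∞ = m/2`. -/
theorem linf_median_of_independent_set
    {V E : Type*} [Fintype V] [DecidableEq V] [Fintype E] [DecidableEq E]
    (G : SimpleGraph V) [DecidableRel G.Adj]
    (hiso : ∀ v : V, ∃ u : V, G.Adj v u)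
    (tail head : E → V)
    (hadj : ∀ e : E, G.Adj (tail e) (head e))
    (hinj : ∀ e₁ e₂ : E,
      (s(tail e₁, head e₁) : Sym2 V) = s(tail e₂, head e₂) → e₁ = e₂)
    (hsurj : ∀ u v : V, G.Adj u v → ∃ e : E, (s(tail e, head e) : Sym2 V) = s(u, v))
    (x : V → E → ℝ)
    (hx : ∀ (v : V) (e : E),
      x v e = if tail e = v then 1 else if head e = v then -1 else 0)
    (S : Finset V) (hne : S.Nonempty)
    (hind : ∀ u ∈ S, ∀ v ∈ S, ¬ G.Adj u v)
    (m : ℕ) (hS : S.card = m) :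
    ∃ c : E → ℝ, ∑ v ∈ S, ‖x v - c‖ = (m : ℝ) / 2 := by
  classical
  set c : E → ℝ := fun e =>
    if tail e ∈ S then (1 : ℝ)/2 else if head e ∈ S then -(1/2) else 0 with hc
  refine ⟨c, ?_⟩
  have key : ∀ v ∈ S, ‖x v - c‖ = 1/2 := by
    intro v hv
    -- componentwise bound
    have hle : ∀ e : E, ‖(x v - c) e‖ ≤ 1/2 := by
      intro e
      simp only [Pi.sub_apply, hx, hc]
      by_cases h1 : tail e = v
      · have : tail e ∈ S := h1 ▸ hv
        simp [h1, this, hv]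
        norm_num [abs_le]
      · by_cases h2 : head e = v
        · have hhS : head e ∈ S := h2 ▸ hv
          have htS : tail e ∉ S := fun hts => hind _ hts _ hhS (h2 ▸ hadj e)
          simp [h1, h2, htS, hhS, hv]
          norm_num [abs_le]
        · simp only [if_neg h1, if_neg h2]
          by_cases h3 : tail e ∈ S
          · simp [h3]
          · by_cases h4 : head e ∈ S
            · simp [h3, h4]
            · simp [h3, h4]
    -- witness component
    obtain ⟨u, hu⟩ := hiso v
    obtain ⟨e, he⟩ := hsurj v u hu
    rw [Sym2.eq_iff] at he
    have hwit : ‖(x v - c) e‖ = 1/2 := by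
      rcases he with ⟨h1, h2⟩ | ⟨h1, h2⟩
      · have : tail e ∈ S := h1 ▸ hv
        simp [Pi.sub_apply, hx, hc, h1, this, hv]
        norm_num [abs_of_nonneg]
      · have hhS : head e ∈ S := h2 ▸ hv
        have hne' : tail e ≠ v := by
          intro h
          have := hadj e; rw [h, h2] at this
          exact G.loopless.irrefl v this
        have htS : tail e ∉ S := fun hts => hind _ hts _ hhS (h2 ▸ hadj e)
        simp [Pi.sub_apply, hx, hc, hne', h2, htS, hhS, hv]
        norm_num [abs_of_nonneg]
    refine le_antisymm ?_ ?_
    · refine (pi_norm_le_iff_of_nonneg (by norm_num)).2 hle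
    · calc (1:ℝ)/2 = ‖(x v - c) e‖ := hwit.symm
        _ ≤ ‖x v - c‖ := norm_le_pi_norm _ e
  rw [Finset.sum_congr rfl key, Finset.sum_const, hS, nsmul_eq_mul]
  ring
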